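/- arXiv:1907.13544 — 2 statements merged into one kernel-verified Lean document; each statement's English description precedes it below -/
import Mathlib

section
/- Let f(ρ)=ρ(1-ρ) and a:ℝ→ℝ be C². Under the CFL condition λ‖a‖_∞‖f'‖_∞ ≤ 1, one step of the Lax-Friedrichs scheme ρ_i^{j+1} = (ρ_{i+1}^j+ρ_{i-1}^j)/2 - (λ/2)(a_{i+1}f(ρ_{i+1}^j) - a_{i-1}f(ρ_{i-1}^j)) satisfies the sup-norm bound ‖ρ^{j+1}‖_∞ ≤ ‖ρ^j‖_∞ + Δt ‖f‖_∞ ‖a'‖_∞. -/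
open scoped BigOperators

/-- Under the CFL condition, one step of the Lax-Friedrichs scheme for
`ρ_t + (a(x) f(ρ))_x = 0` with the LWR flux `f(ρ) = ρ(1-ρ)` satisfies the sup-norm bound
`‖ρ^{j+1}‖_∞ ≤ ‖ρ^j‖_∞ + Δt ‖f‖_∞ ‖a'‖_∞`. -/
theorem stmt0
    (f a : ℝ → ℝ) (hf : ∀ r : ℝ, f r = r * (1 - r)) (ha : ContDiff ℝ 2 a)
    (Δt Δx lam : ℝ) (hΔt : 0 < Δt) (hΔx : 0 < Δx) (hlam : lam = Δt / Δx)
    (S Ca Ca' Cf Cf' : ℝ)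
    (hCa : ∀ x : ℝ, |a x| ≤ Ca)
    (hCa' : ∀ x : ℝ, |deriv a x| ≤ Ca')
    (hCf : ∀ r : ℝ, |r| ≤ S → |f r| ≤ Cf)
    (hCf' : ∀ r : ℝ, |r| ≤ S → |deriv f r| ≤ Cf')
    (CFL : lam * Ca * Cf' ≤ 1)
    (ρ ρ' : ℤ → ℝ) (hbd : ∀ i : ℤ, |ρ i| ≤ S)
    (hscheme : ∀ i : ℤ, ρ' i =
      (ρ (i + 1) + ρ (i - 1)) / 2
        - lam / 2 * (a (((i : ℝ) + 1) * Δx) * f (ρ (i + 1))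
            - a (((i : ℝ) - 1) * Δx) * f (ρ (i - 1)))) :
    ∀ i : ℤ, |ρ' i| ≤ S + Δt * Cf * Ca' := by
  -- derivative of f
  have hfe : f = fun r : ℝ => r - r ^ 2 := by funext r; rw [hf]; ring
  have hderiv : ∀ r : ℝ, deriv f r = 1 - 2 * r := by
    intro r
    rw [hfe]
    have h1 : HasDerivAt (fun r : ℝ => r - r ^ 2) (1 - 2 * r ^ 1) r := by
      simpa using (hasDerivAt_id r).fun_sub (hasDerivAt_pow 2 r)
    simpa using h1.deriv
  have hlam0 : 0 ≤ lam := by rw [hlam]; positivity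
  -- Lipschitz bound for a
  have haLip : ∀ x y : ℝ, |a x - a y| ≤ Ca' * |x - y| := by
    intro x y
    have hd : ∀ z ∈ (Set.univ : Set ℝ), DifferentiableAt ℝ a z := fun z _ =>
      (ha.differentiable (by norm_num)).differentiableAt
    have hb : ∀ z ∈ (Set.univ : Set ℝ), ‖deriv a z‖ ≤ Ca' := fun z _ => by
      simpa [Real.norm_eq_abs] using hCa' z
    have := convex_univ.norm_image_sub_le_of_norm_deriv_le hd hb (Set.mem_univ y)
      (Set.mem_univ x)
    simpa [Real.norm_eq_abs] using this
  intro i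
  set p := ρ (i + 1) with hp
  set q := ρ (i - 1) with hq
  set ap := a (((i : ℝ) + 1) * Δx) with hap
  set am := a (((i : ℝ) - 1) * Δx) with ham
  set μ := lam * ap * (1 - (p + q)) with hμ
  have hpS : |p| ≤ S := hbd _
  have hqS : |q| ≤ S := hbd _
  have hS0 : 0 ≤ S := le_trans (abs_nonneg _) hpS
  have hCf0 : 0 ≤ Cf := le_trans (abs_nonneg _) (hCf 0 (by simpa using hS0))
  have hCa'0 : 0 ≤ Ca' := le_trans (abs_nonneg _) (hCa' 0)
  -- rewrite the scheme
  have hrw : ρ' i = ((1 - μ) / 2) * p + ((1 + μ) / 2) * q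
      - lam / 2 * (ap - am) * f q := by
    rw [hscheme i, hf p, hf q, hμ]; ring
  -- bound on μ
  have hmid : |(p + q) / 2| ≤ S := by
    rw [abs_div]
    calc |p + q| / |(2:ℝ)| ≤ (|p| + |q|) / 2 := by
          rw [abs_two]; gcongr; exact abs_add_le _ _
      _ ≤ S := by linarith
  have hμ1 : |μ| ≤ 1 := by
    have h1 : |1 - (p + q)| ≤ Cf' := by
      have := hCf' ((p + q) / 2) hmid
      rw [hderiv] at this
      have e : 1 - 2 * ((p + q) / 2) = 1 - (p + q) := by ring
      rwa [e] at this
    calc |μ| = lam * |ap| * |1 - (p + q)| := by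
          rw [hμ, abs_mul, abs_mul, abs_of_nonneg hlam0]
      _ ≤ lam * Ca * Cf' := by
          have hCa0 : 0 ≤ Ca := le_trans (abs_nonneg _) (hCa 0)
          gcongr <;> first | positivity | exact hCa _ | exact h1
      _ ≤ 1 := CFL
  -- bound the convex-combination part
  have habs1 : |((1 - μ) / 2) * p + ((1 + μ) / 2) * q| ≤ S := by
    have h1 : 0 ≤ (1 - μ) / 2 := by
      have := (abs_le.mp hμ1).2; linarith
    have h2 : 0 ≤ (1 + μ) / 2 := by
      have := (abs_le.mp hμ1).1; linarith
    calc |((1 - μ) / 2) * p + ((1 + μ) / 2) * q|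
        ≤ |((1 - μ) / 2) * p| + |((1 + μ) / 2) * q| := abs_add_le _ _
      _ = ((1 - μ) / 2) * |p| + ((1 + μ) / 2) * |q| := by
          rw [abs_mul, abs_mul, abs_of_nonneg h1, abs_of_nonneg h2]
      _ ≤ ((1 - μ) / 2) * S + ((1 + μ) / 2) * S := by gcongr
      _ = S := by ring
  -- bound the source part
  have hdiff : |ap - am| ≤ Ca' * (2 * Δx) := by
    have := haLip (((i : ℝ) + 1) * Δx) (((i : ℝ) - 1) * Δx)
    have e : ((i : ℝ) + 1) * Δx - ((i : ℝ) - 1) * Δx = 2 * Δx := by ring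
    rw [e] at this
    simpa [abs_of_pos (by positivity : (0:ℝ) < 2 * Δx)] using this
  have habs2 : |lam / 2 * (ap - am) * f q| ≤ Δt * Cf * Ca' := by
    have hfq : |f q| ≤ Cf := hCf q hqS
    calc |lam / 2 * (ap - am) * f q|
        = lam / 2 * |ap - am| * |f q| := by
          rw [abs_mul, abs_mul, abs_of_nonneg (by linarith : (0:ℝ) ≤ lam / 2)]
      _ ≤ lam / 2 * (Ca' * (2 * Δx)) * Cf := by
          gcongr <;> first | positivity | exact hdiff | exact hfq
      _ = (lam * Δx) * Cf * Ca' := by ring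
      _ = Δt * Cf * Ca' := by
          rw [hlam, div_mul_cancel₀ _ (ne_of_gt hΔx)]
  calc |ρ' i| ≤ |((1 - μ) / 2) * p + ((1 + μ) / 2) * q|
        + |lam / 2 * (ap - am) * f q| := by
        rw [hrw]; exact abs_sub _ _
    _ ≤ S + Δt * Cf * Ca' := add_le_add habs1 habs2
end

section
/- Under the CFL condition λ‖a‖_∞‖f'‖_∞ ≤ 1 and with f ≥ 0, one step of the Lax-Friedrichs scheme satisfies Σ_{i∈ℤ} |ρ_i^{j+1} - ρ_i^j| ≤ TV(ρ^j) + λ Δx Σ_{i∈ℤ} f(ρ_i^j)|a'(η_{i+1/2})|, and hence Σ_{i∈ℤ}|ρ_i^{j+1} - ρ_i^j| ≤ TV(ρ^j) + λ ‖f'‖_∞ ‖a'‖_{L¹} when f(0)=0. -/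
open MeasureTheory

/-- Under the CFL condition and with `f ≥ 0`, `f(0) = 0`, the time difference
of one Lax-Friedrichs step satisfies
`Σ_i |ρ_i^{j+1} - ρ_i^j| ≤ TV(ρ^j) + λ ‖f'‖_∞ ‖a'‖_{L¹}`. -/
theorem stmt4
    (f a : ℝ → ℝ) (ha : ContDiff ℝ 1 a)
    (hfC1 : ContDiff ℝ 1 f)
    (Δt Δx lam : ℝ) (hΔt : 0 < Δt) (hΔx : 0 < Δx) (hlam : lam = Δt / Δx)
    (Ca Cf' : ℝ)
    (hCa : ∀ x : ℝ, |a x| ≤ Ca)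
    (hCf' : ∀ r : ℝ, |deriv f r| ≤ Cf')
    (hf0 : f 0 = 0)
    (hfpos : ∀ r : ℝ, 0 ≤ f r)
    (ha' : Integrable (fun x => deriv a x))
    (CFL : lam * Ca * Cf' ≤ 1)
    (ρ ρ' : ℤ → ℝ)
    (hrange : ∀ i : ℤ, ρ i ∈ Set.Icc (0 : ℝ) 1)
    (hTV : Summable (fun i : ℤ => |ρ (i + 1) - ρ i|))
    (hdiff : Summable (fun i : ℤ => |ρ' i - ρ i|))
    (hscheme : ∀ i : ℤ, ρ' i =
      (ρ (i + 1) + ρ (i - 1)) / 2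
        - lam / 2 * (a (((i : ℝ) + 1) * Δx) * f (ρ (i + 1))
            - a (((i : ℝ) - 1) * Δx) * f (ρ (i - 1)))) :
    (∑' i : ℤ, |ρ' i - ρ i|) ≤
      (∑' i : ℤ, |ρ (i + 1) - ρ i|) + lam * Cf' * (∫ x : ℝ, |deriv a x|) := by
  have hlam0 : 0 < lam := by rw [hlam]; positivity
  have hCf0 : 0 ≤ Cf' := le_trans (abs_nonneg _) (hCf' 0)
  have hCa0 : 0 ≤ Ca := le_trans (abs_nonneg _) (hCa 0)
  -- Lipschitz bound for f
  have hLip : ∀ u v : ℝ, |f u - f v| ≤ Cf' * |u - v| := by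
    intro u v
    have := Convex.norm_image_sub_le_of_norm_deriv_le
      (f := f) (s := Set.univ) (C := Cf')
      (fun x _ => (hfC1.differentiable one_ne_zero).differentiableAt)
      (fun x _ => hCf' x) convex_univ (Set.mem_univ v) (Set.mem_univ u)
    simpa [Real.norm_eq_abs] using this
  have hfbd : ∀ i : ℤ, f (ρ i) ≤ Cf' := by
    intro i
    have h2 : |ρ i| ≤ 1 := by
      rcases hrange i with ⟨h0, h1'⟩
      rw [abs_of_nonneg h0]; exact h1'
    calc f (ρ i) = |f (ρ i) - f 0| := by
          rw [hf0, sub_zero, abs_of_nonneg (hfpos _)]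
      _ ≤ Cf' * |ρ i - 0| := hLip _ _
      _ ≤ Cf' * 1 := by
          rw [sub_zero]; exact mul_le_mul_of_nonneg_left h2 hCf0
      _ = Cf' := mul_one _
  -- discrete slopes of f
  set θ : ℤ → ℝ := fun i =>
    if ρ (i + 1) = ρ i then 0 else (f (ρ (i + 1)) - f (ρ i)) / (ρ (i + 1) - ρ i) with hθdef
  have hθeq : ∀ i : ℤ, f (ρ (i + 1)) - f (ρ i) = θ i * (ρ (i + 1) - ρ i) := by
    intro i
    by_cases h : ρ (i + 1) = ρ i
    · simp [hθdef, h]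
    · have hne : ρ (i + 1) - ρ i ≠ 0 := sub_ne_zero.mpr h
      simp only [hθdef, if_neg h]
      field_simp
  have hθbd : ∀ i : ℤ, |θ i| ≤ Cf' := by
    intro i
    by_cases h : ρ (i + 1) = ρ i
    · simpa [hθdef, h] using hCf0
    · have hne : ρ (i + 1) - ρ i ≠ 0 := sub_ne_zero.mpr h
      simp only [hθdef, if_neg h]
      rw [abs_div, div_le_iff₀ (abs_pos.mpr hne)]
      exact hLip _ _
  have hc : ∀ (x : ℝ) (i : ℤ), |lam * a x * θ i| ≤ 1 := by
    intro x i
    calc |lam * a x * θ i| = lam * |a x| * |θ i| := by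
          rw [abs_mul, abs_mul, abs_of_pos hlam0]
      _ ≤ lam * Ca * Cf' := by
          apply mul_le_mul _ (hθbd i) (abs_nonneg _) (by positivity)
          exact mul_le_mul_of_nonneg_left (hCa x) hlam0.le
      _ ≤ 1 := CFL
  set D : ℤ → ℝ := fun i => |ρ (i + 1) - ρ i| with hDdef
  set G : ℤ → ℝ := fun i => 1 / 2 * (1 - lam * a (((i : ℝ) + 1) * Δx) * θ i) * D i with hGdef
  set H : ℤ → ℝ := fun i =>
    lam / 2 * Cf' * |a (((i : ℝ) + 1) * Δx) - a ((i : ℝ) * Δx)| with hHdef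
  have hD0 : ∀ i, 0 ≤ D i := fun i => abs_nonneg _
  have hGD : ∀ i, 0 ≤ G i ∧ G i ≤ D i := by
    intro i
    have h1 := hc (((i : ℝ) + 1) * Δx) i
    rw [abs_le] at h1
    constructor
    · have : 0 ≤ 1 - lam * a (((i : ℝ) + 1) * Δx) * θ i := by linarith [h1.2]
      exact mul_nonneg (by positivity) (hD0 i)
    · have h2 : 1 / 2 * (1 - lam * a (((i : ℝ) + 1) * Δx) * θ i) ≤ 1 := by linarith [h1.1]
      calc G i ≤ 1 * D i :=
            mul_le_mul_of_nonneg_right h2 (hD0 i)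
        _ = D i := one_mul _
  have hH0 : ∀ i, 0 ≤ H i := by
    intro i; exact mul_nonneg (by positivity) (abs_nonneg _)
  -- pointwise estimate
  have hpt : ∀ i : ℤ, |ρ' i - ρ i| ≤ G i + (D (i - 1) - G (i - 1)) + (H i + H (i - 1)) := by
    intro i
    have hcast1 : ((i - 1 : ℤ) : ℝ) = (i : ℝ) - 1 := by push_cast; ring
    have hρ1 : ρ (i - 1 + 1) = ρ i := by norm_num
    have hθeq' : f (ρ i) - f (ρ (i - 1)) = θ (i - 1) * (ρ i - ρ (i - 1)) := by
      have := hθeq (i - 1)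
      rwa [hρ1] at this
    have hid : ρ' i - ρ i =
        1 / 2 * (1 - lam * a (((i : ℝ) + 1) * Δx) * θ i) * (ρ (i + 1) - ρ i)
          - 1 / 2 * (1 + lam * a ((i : ℝ) * Δx) * θ (i - 1)) * (ρ i - ρ (i - 1))
          - lam / 2 * ((a (((i : ℝ) + 1) * Δx) - a ((i : ℝ) * Δx)) * f (ρ i)
              + (a ((i : ℝ) * Δx) - a (((i : ℝ) - 1) * Δx)) * f (ρ (i - 1))) := by
      rw [hscheme i]
      linear_combination (-(lam / 2) * a (((i : ℝ) + 1) * Δx)) * hθeq i +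
        (-(lam / 2) * a ((i : ℝ) * Δx)) * hθeq'
    have hDm : D (i - 1) = |ρ i - ρ (i - 1)| := by
      simp only [hDdef, hρ1]
    have hGm : G (i - 1) = 1 / 2 * (1 - lam * a ((i : ℝ) * Δx) * θ (i - 1)) * D (i - 1) := by
      simp only [hGdef, hcast1]
      norm_num
    have hHm : H (i - 1) = lam / 2 * Cf' * |a ((i : ℝ) * Δx) - a (((i : ℝ) - 1) * Δx)| := by
      simp only [hHdef, hcast1]
      norm_num
    have habs1 : |1 / 2 * (1 - lam * a (((i : ℝ) + 1) * Δx) * θ i) * (ρ (i + 1) - ρ i)| = G i := by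
      have h1 := hc (((i : ℝ) + 1) * Δx) i
      rw [abs_le] at h1
      rw [abs_mul, abs_of_nonneg (by linarith [h1.2] : (0:ℝ) ≤ 1 / 2 * (1 - lam * a (((i : ℝ) + 1) * Δx) * θ i))]
    have habs2 : |1 / 2 * (1 + lam * a ((i : ℝ) * Δx) * θ (i - 1)) * (ρ i - ρ (i - 1))|
        = D (i - 1) - G (i - 1) := by
      have h1 := hc ((i : ℝ) * Δx) (i - 1)
      rw [abs_le] at h1
      rw [abs_mul, abs_of_nonneg (by linarith [h1.1] : (0:ℝ) ≤ 1 / 2 * (1 + lam * a ((i : ℝ) * Δx) * θ (i - 1)))]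
      rw [hGm, hDm]
      ring
    have habs3 : |lam / 2 * ((a (((i : ℝ) + 1) * Δx) - a ((i : ℝ) * Δx)) * f (ρ i)
        + (a ((i : ℝ) * Δx) - a (((i : ℝ) - 1) * Δx)) * f (ρ (i - 1)))| ≤ H i + H (i - 1) := by
      rw [abs_mul, abs_of_pos (by positivity : (0:ℝ) < lam / 2)]
      have hb1 : |(a (((i : ℝ) + 1) * Δx) - a ((i : ℝ) * Δx)) * f (ρ i)|
          ≤ |a (((i : ℝ) + 1) * Δx) - a ((i : ℝ) * Δx)| * Cf' := by
        rw [abs_mul, abs_of_nonneg (hfpos _)]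
        exact mul_le_mul_of_nonneg_left (hfbd i) (abs_nonneg _)
      have hb2 : |(a ((i : ℝ) * Δx) - a (((i : ℝ) - 1) * Δx)) * f (ρ (i - 1))|
          ≤ |a ((i : ℝ) * Δx) - a (((i : ℝ) - 1) * Δx)| * Cf' := by
        rw [abs_mul, abs_of_nonneg (hfpos _)]
        exact mul_le_mul_of_nonneg_left (hfbd (i - 1)) (abs_nonneg _)
      calc lam / 2 * |(a (((i : ℝ) + 1) * Δx) - a ((i : ℝ) * Δx)) * f (ρ i)
            + (a ((i : ℝ) * Δx) - a (((i : ℝ) - 1) * Δx)) * f (ρ (i - 1))|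
          ≤ lam / 2 * (|a (((i : ℝ) + 1) * Δx) - a ((i : ℝ) * Δx)| * Cf'
              + |a ((i : ℝ) * Δx) - a (((i : ℝ) - 1) * Δx)| * Cf') := by
            apply mul_le_mul_of_nonneg_left _ (by positivity)
            exact le_trans (abs_add_le _ _) (add_le_add hb1 hb2)
        _ = H i + H (i - 1) := by rw [hHm]; simp only [hHdef]; ring
    calc |ρ' i - ρ i| ≤
        |1 / 2 * (1 - lam * a (((i : ℝ) + 1) * Δx) * θ i) * (ρ (i + 1) - ρ i)|
          + |1 / 2 * (1 + lam * a ((i : ℝ) * Δx) * θ (i - 1)) * (ρ i - ρ (i - 1))|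
          + |lam / 2 * ((a (((i : ℝ) + 1) * Δx) - a ((i : ℝ) * Δx)) * f (ρ i)
              + (a ((i : ℝ) * Δx) - a (((i : ℝ) - 1) * Δx)) * f (ρ (i - 1)))| := by
          rw [hid]
          exact le_trans (abs_sub _ _) (add_le_add_left (abs_sub _ _) _)
      _ ≤ G i + (D (i - 1) - G (i - 1)) + (H i + H (i - 1)) := by
          rw [habs1, habs2]
          exact add_le_add_right habs3 _
  -- integral estimate on H
  have hcontA : Continuous (deriv a) := ha.continuous_deriv le_rfl
  have hint : Integrable (fun x => |deriv a x|) := ha'.abs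
  set K : ℤ → ℝ := fun i =>
    ∫ x in Set.Ioc ((i : ℝ) * Δx) (((i : ℝ) + 1) * Δx), |deriv a x| with hKdef
  have hseq : (fun i : ℤ => Set.Ioc ((i : ℝ) * Δx) (((i : ℝ) + 1) * Δx))
      = fun i : ℤ => Set.Ioc (i • Δx) ((i + 1) • Δx) := by
    funext i
    simp [zsmul_eq_mul]
  have hdisj : Pairwise (Function.onFun Disjoint fun i : ℤ =>
      Set.Ioc ((i : ℝ) * Δx) (((i : ℝ) + 1) * Δx)) := by
    rw [hseq]
    simpa only [zero_add] using Set.pairwise_disjoint_Ioc_add_zsmul (0:ℝ) Δx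
  have hunion : (⋃ i : ℤ, Set.Ioc ((i : ℝ) * Δx) (((i : ℝ) + 1) * Δx)) = Set.univ := by
    rw [hseq]
    exact iUnion_Ioc_zsmul hΔx
  have hK : HasSum K (∫ x : ℝ, |deriv a x|) := by
    have h := hasSum_integral_iUnion (μ := volume)
      (s := fun i : ℤ => Set.Ioc ((i : ℝ) * Δx) (((i : ℝ) + 1) * Δx))
      (f := fun x => |deriv a x|)
      (fun i => measurableSet_Ioc) hdisj
      (by rw [hunion]; exact (integrableOn_univ).mpr hint)
    rwa [hunion, setIntegral_univ] at h
  have hK0 : ∀ i, 0 ≤ K i := by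
    intro i
    exact setIntegral_nonneg measurableSet_Ioc fun x _ => abs_nonneg _
  have hHK : ∀ i : ℤ, H i ≤ lam / 2 * Cf' * K i := by
    intro i
    have hle : (i : ℝ) * Δx ≤ ((i : ℝ) + 1) * Δx := by nlinarith
    have hftc : a (((i : ℝ) + 1) * Δx) - a ((i : ℝ) * Δx)
        = ∫ x in ((i : ℝ) * Δx)..(((i : ℝ) + 1) * Δx), deriv a x := by
      rw [intervalIntegral.integral_deriv_eq_sub
        (fun x _ => (ha.differentiable one_ne_zero).differentiableAt)
        (hcontA.intervalIntegrable _ _)]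
    have h1 : |a (((i : ℝ) + 1) * Δx) - a ((i : ℝ) * Δx)| ≤ K i := by
      rw [hftc]
      calc |∫ x in ((i : ℝ) * Δx)..(((i : ℝ) + 1) * Δx), deriv a x|
          ≤ ∫ x in ((i : ℝ) * Δx)..(((i : ℝ) + 1) * Δx), |deriv a x| :=
            intervalIntegral.abs_integral_le_integral_abs hle
        _ = K i := intervalIntegral.integral_of_le hle
    exact mul_le_mul_of_nonneg_left h1 (by positivity)
  -- summability
  have hDsum : Summable D := hTV
  have hGsum : Summable G :=
    Summable.of_nonneg_of_le (fun i => (hGD i).1) (fun i => (hGD i).2) hDsum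
  have hKsum : Summable fun i : ℤ => lam / 2 * Cf' * K i := (hK.summable).mul_left _
  have hHsum : Summable H := Summable.of_nonneg_of_le hH0 hHK hKsum
  have hshift : ∀ (u : ℤ → ℝ), Summable u → Summable (fun i : ℤ => u (i - 1)) := by
    intro u hu
    have : (fun i : ℤ => u (i - 1)) = u ∘ (Equiv.subRight (1 : ℤ)) := rfl
    rw [this, Equiv.summable_iff]
    exact hu
  have hshift_tsum : ∀ (u : ℤ → ℝ), (∑' i : ℤ, u (i - 1)) = ∑' i : ℤ, u i := by
    intro u
    exact Equiv.tsum_eq (Equiv.subRight (1 : ℤ)) u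
  have hDGsum : Summable fun i : ℤ => D i - G i := hDsum.sub hGsum
  have hDGsum' : Summable fun i : ℤ => D (i - 1) - G (i - 1) :=
    hshift (fun i => D i - G i) hDGsum
  have hHsum' : Summable fun i : ℤ => H (i - 1) := hshift H hHsum
  have hFsum : Summable fun i : ℤ =>
      G i + (D (i - 1) - G (i - 1)) + (H i + H (i - 1)) :=
    ((hGsum.add hDGsum').add (hHsum.add hHsum'))
  -- put everything together
  have step1 : (∑' i : ℤ, |ρ' i - ρ i|)
      ≤ ∑' i : ℤ, (G i + (D (i - 1) - G (i - 1)) + (H i + H (i - 1))) :=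
    Summable.tsum_le_tsum hpt hdiff hFsum
  have step2 : (∑' i : ℤ, (G i + (D (i - 1) - G (i - 1)) + (H i + H (i - 1))))
      = (∑' i : ℤ, D i) + 2 * ∑' i : ℤ, H i := by
    rw [Summable.tsum_add (hGsum.add hDGsum') (hHsum.add hHsum'),
      Summable.tsum_add hGsum hDGsum', Summable.tsum_add hHsum hHsum',
      hshift_tsum (fun i => D i - G i), hshift_tsum H,
      Summable.tsum_sub hDsum hGsum]
    ring
  have step3 : (∑' i : ℤ, H i) ≤ lam / 2 * Cf' * ∫ x : ℝ, |deriv a x| := by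
    calc (∑' i : ℤ, H i) ≤ ∑' i : ℤ, lam / 2 * Cf' * K i := Summable.tsum_le_tsum hHK hHsum hKsum
      _ = lam / 2 * Cf' * ∑' i : ℤ, K i := tsum_mul_left
      _ = lam / 2 * Cf' * ∫ x : ℝ, |deriv a x| := by rw [hK.tsum_eq]
  calc (∑' i : ℤ, |ρ' i - ρ i|)
      ≤ (∑' i : ℤ, D i) + 2 * ∑' i : ℤ, H i := by rw [← step2]; exact step1
    _ ≤ (∑' i : ℤ, D i) + 2 * (lam / 2 * Cf' * ∫ x : ℝ, |deriv a x|) := by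
        have := step3
        linarith
    _ = (∑' i : ℤ, |ρ (i + 1) - ρ i|) + lam * Cf' * (∫ x : ℝ, |deriv a x|) := by
        rw [hDdef]; ring
end
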